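/- The restriction of y ↦ C_BS(k,y) to [0, √(2k)] is convex and its restriction to [√(2k), ∞) is concave, for any fixed k > 0. -/

import Mathlib

open MeasureTheory Real Filter Asymptotics Set
open Topology

/-- Standard normal density. -/
noncomputable def phi (z : ℝ) : ℝ := (Real.sqrt (2 * Real.pi))⁻¹ * Real.exp (-z ^ 2 / 2)

/-- Standard normal CDF. -/
noncomputable def Phi (x : ℝ) : ℝ := ∫ z in Set.Iic x, phi z

/-- Black–Scholes normalized call price. -/
noncomputable def CBS (k y : ℝ) : ℝ :=
  if 0 < y then Phi (-k / y + y / 2) - Real.exp k * Phi (-k / y - y / 2)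
  else max (1 - Real.exp k) 0

/-- Implied total standard deviation: inverse of `CBS k` on `[0,∞)`. -/
noncomputable def YBS (k c : ℝ) : ℝ := sInf {y : ℝ | 0 ≤ y ∧ CBS k y = c}

/-- Inverse of the standard normal CDF on (0,1). -/
noncomputable def PhiInv (u : ℝ) : ℝ := sInf {x : ℝ | u ≤ Phi x}

/-- Extended-real quantile with the convention `Φ⁻¹(u) = +∞` for `u ≥ 1`, `-∞` for `u ≤ 0`. -/
noncomputable def PhiInvE (u : ℝ) : EReal :=
  if 1 ≤ u then ⊤ else if u ≤ 0 then ⊥ else ((PhiInv u : ℝ) : EReal)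

lemma phi_cont : Continuous phi := by
  unfold phi
  fun_prop

lemma phi_integrable : MeasureTheory.Integrable phi := by
  have h := integrable_exp_neg_mul_sq (by norm_num : (0:ℝ) < 1/2)
  have h2 : Integrable (fun z : ℝ => Real.exp (-z ^ 2 / 2)) := by
    convert h using 2 with z
    ring_nf
  exact h2.const_mul _

lemma phi_nonneg (z : ℝ) : 0 ≤ phi z := by
  unfold phi
  positivity

lemma Phi_eq (x : ℝ) : Phi x = Phi 0 + ∫ t in (0:ℝ)..x, phi t := by
  rw [← intervalIntegral.integral_Iic_sub_Iic phi_integrable.integrableOn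
    phi_integrable.integrableOn]
  unfold Phi; ring

lemma hasDerivAt_Phi (x : ℝ) : HasDerivAt Phi (phi x) x := by
  have h : HasDerivAt (fun u => ∫ t in (0:ℝ)..u, phi t) (phi x) x :=
    intervalIntegral.integral_hasDerivAt_right
      (phi_integrable.intervalIntegrable)
      (phi_cont.stronglyMeasurable.stronglyMeasurableAtFilter)
      phi_cont.continuousAt
  exact (h.const_add (Phi 0)).congr_of_eventuallyEq
    (Filter.Eventually.of_forall fun y => (Phi_eq y))

lemma Phi_tendsto_atBot : Tendsto Phi atBot (𝓝 0) := by
  have h : Tendsto (fun x : ℝ => ∫ z, (Set.Iic x).indicator phi z) atBot (𝓝 (∫ _ : ℝ, (0:ℝ))) := by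
    apply MeasureTheory.tendsto_integral_filter_of_dominated_convergence phi
    · exact Filter.Eventually.of_forall fun x =>
        (phi_cont.aestronglyMeasurable).indicator measurableSet_Iic
    · refine Filter.Eventually.of_forall fun x => Filter.Eventually.of_forall fun z => ?_
      rw [Real.norm_eq_abs, abs_of_nonneg (Set.indicator_nonneg (fun z _ => phi_nonneg z) z)]
      exact Set.indicator_le_self' (fun z _ => phi_nonneg z) z
    · exact phi_integrable
    · refine Filter.Eventually.of_forall fun z => ?_
      have : ∀ᶠ x : ℝ in atBot, (Set.Iic x).indicator phi z = 0 := by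
        filter_upwards [eventually_lt_atBot z] with x hx
        simp [Set.indicator_of_notMem, not_le.mpr hx]
      exact Tendsto.congr' (this.mono fun x hx => hx.symm) tendsto_const_nhds
  simp only [MeasureTheory.integral_zero] at h
  refine h.congr fun x => ?_
  rw [MeasureTheory.integral_indicator measurableSet_Iic]; rfl

lemma exp_phi (k y : ℝ) (hy : y ≠ 0) :
    Real.exp k * phi (-k / y - y / 2) = phi (-k / y + y / 2) := by
  unfold phi
  rw [mul_comm (Real.exp k), mul_assoc, ← Real.exp_add]
  congr 2
  field_simp
  ring

lemma hasDerivAt_CBS (k : ℝ) {y : ℝ} (hy : 0 < y) :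
    HasDerivAt (CBS k) (phi (-k / y + y / 2)) y := by
  have hy' : y ≠ 0 := hy.ne'
  have h1 : HasDerivAt (fun x : ℝ => -k / x) (k / y ^ 2) y := by
    have h := (hasDerivAt_inv hy').const_mul (-k)
    have e1 : (fun x : ℝ => -k * x⁻¹) = fun x : ℝ => -k / x := by
      funext x; ring
    have e2 : -k * -((y:ℝ) ^ 2)⁻¹ = k / y ^ 2 := by ring
    rw [e1, e2] at h; exact h
  have hhalf : HasDerivAt (fun x : ℝ => x / 2) ((1:ℝ) / 2) y := by
    simpa using (hasDerivAt_id y).div_const 2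
  have hd1 : HasDerivAt (fun x : ℝ => -k / x + x / 2) (k / y ^ 2 + 1 / 2) y := h1.add hhalf
  have hd2 : HasDerivAt (fun x : ℝ => -k / x - x / 2) (k / y ^ 2 - 1 / 2) y := h1.sub hhalf
  have hPhi1 : HasDerivAt (fun x : ℝ => Phi (-k / x + x / 2))
      (phi (-k / y + y / 2) * (k / y ^ 2 + 1 / 2)) y :=
    by have := (hasDerivAt_Phi (-k / y + y / 2)).comp y hd1; exact this
  have hPhi2 : HasDerivAt (fun x : ℝ => Phi (-k / x - x / 2))
      (phi (-k / y - y / 2) * (k / y ^ 2 - 1 / 2)) y :=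
    by have := (hasDerivAt_Phi (-k / y - y / 2)).comp y hd2; exact this
  have hg : HasDerivAt
      (fun x : ℝ => Phi (-k / x + x / 2) - Real.exp k * Phi (-k / x - x / 2))
      (phi (-k / y + y / 2) * (k / y ^ 2 + 1 / 2) -
        Real.exp k * (phi (-k / y - y / 2) * (k / y ^ 2 - 1 / 2))) y :=
    hPhi1.sub (hPhi2.const_mul (Real.exp k))
  have hval : phi (-k / y + y / 2) * (k / y ^ 2 + 1 / 2) -
      Real.exp k * (phi (-k / y - y / 2) * (k / y ^ 2 - 1 / 2)) = phi (-k / y + y / 2) := by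
    rw [← mul_assoc, exp_phi k y hy']
    ring
  rw [hval] at hg
  refine hg.congr_of_eventuallyEq ?_
  filter_upwards [Ioi_mem_nhds hy] with t ht
  simp only [CBS]
  rw [if_pos (mem_Ioi.mp ht)]

lemma CBS_zero (k : ℝ) (hk : 0 < k) : CBS k 0 = 0 := by
  simp only [CBS, lt_irrefl, if_false]
  exact max_eq_right (sub_nonpos.mpr (Real.one_le_exp hk.le))

lemma CBS_tendsto_zero (k : ℝ) (hk : 0 < k) :
    Tendsto (CBS k) (𝓝[>] (0:ℝ)) (𝓝 0) := by
  have hm : Tendsto (fun y : ℝ => -k / y) (𝓝[>] (0:ℝ)) atBot := by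
    have h0 : Tendsto (fun y : ℝ => k * y⁻¹) (𝓝[>] (0:ℝ)) atTop :=
      (tendsto_inv_nhdsGT_zero).const_mul_atTop hk
    have h1 : Tendsto (fun y : ℝ => -(k * y⁻¹)) (𝓝[>] (0:ℝ)) atBot :=
      tendsto_neg_atTop_atBot.comp h0
    exact h1.congr (fun y => by ring)
  have hhalf : Tendsto (fun y : ℝ => y / 2) (𝓝[>] (0:ℝ)) (𝓝 0) := by
    have : Tendsto (fun y : ℝ => y / 2) (𝓝 (0:ℝ)) (𝓝 (0 / 2)) :=
      (continuous_id.div_const 2).tendsto 0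
    simpa using this.mono_left nhdsWithin_le_nhds
  have hd1 : Tendsto (fun y : ℝ => -k / y + y / 2) (𝓝[>] (0:ℝ)) atBot := hm.atBot_add hhalf
  have hd2 : Tendsto (fun y : ℝ => -k / y - y / 2) (𝓝[>] (0:ℝ)) atBot := by
    have := hm.atBot_add (hhalf.neg)
    simpa [sub_eq_add_neg] using this
  have h1 : Tendsto (fun y : ℝ => Phi (-k / y + y / 2)) (𝓝[>] (0:ℝ)) (𝓝 0) :=
    Phi_tendsto_atBot.comp hd1
  have h2 : Tendsto (fun y : ℝ => Phi (-k / y - y / 2)) (𝓝[>] (0:ℝ)) (𝓝 0) :=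
    Phi_tendsto_atBot.comp hd2
  have hfin : Tendsto
      (fun y : ℝ => Phi (-k / y + y / 2) - Real.exp k * Phi (-k / y - y / 2))
      (𝓝[>] (0:ℝ)) (𝓝 0) := by
    have := h1.sub ((h2.const_mul (Real.exp k)))
    simpa using this
  refine hfin.congr' ?_
  filter_upwards [self_mem_nhdsWithin] with t ht
  simp only [CBS, if_pos (mem_Ioi.mp ht)]

lemma phi_le_phi {u v : ℝ} (h : v ^ 2 ≤ u ^ 2) : phi u ≤ phi v := by
  unfold phi
  have he : Real.exp (-u ^ 2 / 2) ≤ Real.exp (-v ^ 2 / 2) :=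
    Real.exp_le_exp.mpr (by linarith)
  exact mul_le_mul_of_nonneg_left he (by positivity)

lemma d1_mono {k a b : ℝ} (hk : 0 < k) (ha : 0 < a) (hab : a ≤ b) :
    -k / a + a / 2 ≤ -k / b + b / 2 := by
  have hb : 0 < b := lt_of_lt_of_le ha hab
  have h1 : k / b ≤ k / a := by gcongr
  have h2 : -k / a = -(k / a) := by ring
  have h3 : -k / b = -(k / b) := by ring
  rw [h2, h3]; linarith

lemma d1_eq {k y : ℝ} (hy : y ≠ 0) : -k / y + y / 2 = (y ^ 2 - 2 * k) / (2 * y) := by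
  field_simp; ring

theorem stmt_11 (k : ℝ) (hk : 0 < k) :
    ConvexOn ℝ (Set.Icc 0 (Real.sqrt (2 * k))) (CBS k) ∧
    ConcaveOn ℝ (Set.Ici (Real.sqrt (2 * k))) (CBS k) := by
  set r := Real.sqrt (2 * k) with hr
  have hrpos : 0 < r := Real.sqrt_pos.mpr (by linarith)
  have hderiv : ∀ y : ℝ, 0 < y → deriv (CBS k) y = phi (-k / y + y / 2) :=
    fun y hy => (hasDerivAt_CBS k hy).deriv
  have hcontIci : ContinuousOn (CBS k) (Ici 0) := by
    intro y hy
    rcases eq_or_lt_of_le (mem_Ici.mp hy) with h0 | h0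
    · rw [← h0]
      rw [ContinuousWithinAt, ← Set.Ioi_insert, nhdsWithin_insert, tendsto_sup]
      constructor
      · exact tendsto_pure_nhds (CBS k) 0
      · rw [CBS_zero k hk]; exact CBS_tendsto_zero k hk
    · exact (hasDerivAt_CBS k h0).continuousAt.continuousWithinAt
  constructor
  · refine MonotoneOn.convexOn_of_deriv (convex_Icc _ _)
      (hcontIci.mono (Icc_subset_Ici_self)) ?_ ?_
    · rw [interior_Icc]
      exact fun y hy => (hasDerivAt_CBS k hy.1).differentiableAt.differentiableWithinAt
    · rw [interior_Icc]
      intro a ha b hb hab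
      rw [hderiv a ha.1, hderiv b hb.1]
      have hbpos : 0 < b := hb.1
      have huv : -k / a + a / 2 ≤ -k / b + b / 2 := d1_mono hk ha.1 hab
      have hb2 : b ^ 2 < 2 * k := (Real.lt_sqrt hbpos.le).mp hb.2
      have hv : -k / b + b / 2 ≤ 0 := by
        rw [d1_eq hbpos.ne']
        apply div_nonpos_of_nonpos_of_nonneg <;> nlinarith
      exact phi_le_phi (by nlinarith)
  · refine AntitoneOn.concaveOn_of_deriv (convex_Ici _)
      (hcontIci.mono (Ici_subset_Ici.mpr hrpos.le)) ?_ ?_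
    · rw [interior_Ici]
      exact fun y hy => (hasDerivAt_CBS k (hrpos.trans hy)).differentiableAt.differentiableWithinAt
    · rw [interior_Ici]
      intro a ha b hb hab
      have hapos : 0 < a := hrpos.trans ha
      rw [hderiv a hapos, hderiv b (hapos.trans_le hab)]
      have huv : -k / a + a / 2 ≤ -k / b + b / 2 := d1_mono hk hapos hab
      have ha2 : 2 * k < a ^ 2 := (Real.sqrt_lt' hapos).mp ha
      have hu : 0 ≤ -k / a + a / 2 := by
        rw [d1_eq hapos.ne']
        apply div_nonneg <;> nlinarith
      exact phi_le_phi (by nlinarith)
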